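/- Let G be a finite group acting simply 3-transitively on a finite set X (for each pair of triples of distinct points there is exactly one g mapping one to the other componentwise). Let W ⊆ X and let mu be a probability measure on G with max value ‖mu‖_∞. Then either ∑_{g} mu(g) |W ∩ gW| < 4 or ∑_{g} mu(g) |W ∩ gW| ≤ 2 ‖mu‖_∞^{1/3} |W|². -/

import Mathlib

open Finset

private lemma card_distinct_triples {X : Type*} [DecidableEq X] (s : Finset X) :
    ((s ×ˢ s ×ˢ s).filter fun p => p.1 ≠ p.2.1 ∧ p.1 ≠ p.2.2 ∧ p.2.1 ≠ p.2.2).card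
      = s.card * ((s.card - 1) * (s.card - 1) - (s.card - 1)) := by
  have hset : ((s ×ˢ s ×ˢ s).filter fun p => p.1 ≠ p.2.1 ∧ p.1 ≠ p.2.2 ∧ p.2.1 ≠ p.2.2)
      = s.biUnion (fun a => {a} ×ˢ (s.erase a).offDiag) := by
    ext ⟨a, b, c⟩
    simp only [mem_filter, mem_product, mem_biUnion, mem_singleton, Finset.mem_offDiag,
      mem_erase]
    constructor
    · rintro ⟨⟨ha, hb, hc⟩, h1, h2, h3⟩
      exact ⟨a, ha, rfl, ⟨Ne.symm h1, hb⟩, ⟨Ne.symm h2, hc⟩, h3⟩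
    · rintro ⟨x, hx, rfl, ⟨hb1, hb⟩, ⟨hc1, hc⟩, hbc⟩
      exact ⟨⟨hx, hb, hc⟩, Ne.symm hb1, Ne.symm hc1, hbc⟩
  rw [hset, card_biUnion]
  · have h : ∀ a ∈ s, ({a} ×ˢ (s.erase a).offDiag).card
        = (s.card - 1) * (s.card - 1) - (s.card - 1) := by
      intro a ha
      rw [card_product, card_singleton, one_mul, Finset.offDiag_card, card_erase_of_mem ha]
    rw [Finset.sum_congr rfl h, Finset.sum_const, smul_eq_mul]
  · intro a _ b _ hab
    simp only [Finset.disjoint_left]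
    rintro ⟨x, y⟩ hx hy
    simp only [mem_product, mem_singleton] at hx hy
    exact hab (hx.1.symm.trans hy.1)

private lemma key_count {G X : Type*} [Group G] [Fintype G] [Fintype X] [DecidableEq X]
    [MulAction G X]
    (h3t : ∀ x₁ x₂ x₃ y₁ y₂ y₃ : X,
      x₁ ≠ x₂ → x₁ ≠ x₃ → x₂ ≠ x₃ → y₁ ≠ y₂ → y₁ ≠ y₃ → y₂ ≠ y₃ →
      ∃! g : G, g • x₁ = y₁ ∧ g • x₂ = y₂ ∧ g • x₃ = y₃)
    (W : Finset X) :
    ∑ g : G, (((((W ∩ W.image (fun w => g • w)) ×ˢ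
          (W ∩ W.image (fun w => g • w)) ×ˢ (W ∩ W.image (fun w => g • w))).filter
          fun p => p.1 ≠ p.2.1 ∧ p.1 ≠ p.2.2 ∧ p.2.1 ≠ p.2.2)).card)
      ≤ W.card ^ 3 * W.card ^ 3 := by
  set D := fun g : G => (((W ∩ W.image (fun w => g • w)) ×ˢ
      (W ∩ W.image (fun w => g • w)) ×ˢ (W ∩ W.image (fun w => g • w))).filter
      fun p => p.1 ≠ p.2.1 ∧ p.1 ≠ p.2.2 ∧ p.2.1 ≠ p.2.2) with hD
  have hsig : ∑ g : G, (D g).card = ((univ : Finset G).sigma fun g => D g).card :=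
    (Finset.card_sigma _ _).symm
  rw [hsig]
  have hle : ((univ : Finset G).sigma fun g => D g).card
      ≤ ((W ×ˢ W ×ˢ W) ×ˢ (W ×ˢ W ×ˢ W)).card := by
    apply Finset.card_le_card_of_injOn
      (fun q => ((q.1⁻¹ • q.2.1, q.1⁻¹ • q.2.2.1, q.1⁻¹ • q.2.2.2), q.2))
    · rintro ⟨g, a, b, c⟩ hq
      simp only [Finset.mem_coe, Finset.mem_sigma, Finset.mem_univ, hD, mem_filter, mem_product,
        mem_inter, mem_image, true_and] at hq
      obtain ⟨⟨⟨haW, wa, hwa, hwa'⟩, ⟨hbW, wb, hwb, hwb'⟩, ⟨hcW, wc, hwc, hwc'⟩⟩, _, _, _⟩ := hq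
      simp only [Finset.mem_coe, mem_product]
      refine ⟨⟨?_, ?_, ?_⟩, haW, hbW, hcW⟩
      · rw [← hwa', inv_smul_smul]; exact hwa
      · rw [← hwb', inv_smul_smul]; exact hwb
      · rw [← hwc', inv_smul_smul]; exact hwc
    · rintro ⟨g, a, b, c⟩ hq ⟨g', a', b', c'⟩ hq' heq
      simp only [Prod.mk.injEq] at heq
      obtain ⟨⟨h1, h2, h3⟩, h4, h5, h6⟩ := heq
      subst h4; subst h5; subst h6
      have hmem : (a, b, c) ∈ D g := (Finset.mem_sigma.mp hq).2
      obtain ⟨-, hab, hac, hbc⟩ := Finset.mem_filter.mp hmem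
      have hab' : g⁻¹ • a ≠ g⁻¹ • b := fun h => hab (smul_left_cancel g⁻¹ h)
      have hac' : g⁻¹ • a ≠ g⁻¹ • c := fun h => hac (smul_left_cancel g⁻¹ h)
      have hbc' : g⁻¹ • b ≠ g⁻¹ • c := fun h => hbc (smul_left_cancel g⁻¹ h)
      obtain ⟨g₀, _, huniq⟩ := h3t (g⁻¹ • a) (g⁻¹ • b) (g⁻¹ • c) a b c hab' hac' hbc' hab hac hbc
      have e1 : g = g₀ := huniq g ⟨smul_inv_smul g a, smul_inv_smul g b, smul_inv_smul g c⟩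
      have e2 : g' = g₀ := by
        apply huniq g'
        refine ⟨?_, ?_, ?_⟩
        · rw [h1, smul_inv_smul]
        · rw [h2, smul_inv_smul]
        · rw [h3, smul_inv_smul]
      have : g = g' := e1.trans e2.symm
      subst this
      rfl
  calc ((univ : Finset G).sigma fun g => D g).card
      ≤ ((W ×ˢ W ×ˢ W) ×ˢ (W ×ˢ W ×ˢ W)).card := hle
    _ = W.card ^ 3 * W.card ^ 3 := by simp only [card_product]; ring

private lemma cube_max_le (n : ℕ) :
    (max ((n : ℝ) - 2) 0) ^ 3 ≤ ((n * ((n - 1) * (n - 1) - (n - 1)) : ℕ) : ℝ) := by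
  match n with
  | 0 => norm_num
  | 1 => norm_num
  | 2 => norm_num
  | (n + 3) =>
    have h2 : (n + 3) * (((n + 3) - 1) * ((n + 3) - 1) - ((n + 3) - 1))
        = (n + 3) * ((n + 2) * (n + 1)) := by
      have h3 : (n + 3) - 1 = n + 2 := rfl
      rw [h3]
      congr 1
      have : (n + 2) * (n + 2) = (n + 2) * (n + 1) + (n + 2) := by ring
      omega
    rw [h2]
    have hn : (0 : ℝ) ≤ (n : ℝ) := Nat.cast_nonneg n
    have hmax : max (((n + 3 : ℕ) : ℝ) - 2) 0 = (n : ℝ) + 1 := by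
      rw [max_eq_left (by push_cast; linarith)]; push_cast; ring
    rw [hmax]
    push_cast
    nlinarith [hn]

theorem popular_intersection_bound
    {G X : Type*} [Group G] [Fintype G] [Fintype X] [DecidableEq X]
    [MulAction G X]
    (h3t : ∀ x₁ x₂ x₃ y₁ y₂ y₃ : X,
      x₁ ≠ x₂ → x₁ ≠ x₃ → x₂ ≠ x₃ → y₁ ≠ y₂ → y₁ ≠ y₃ → y₂ ≠ y₃ →
      ∃! g : G, g • x₁ = y₁ ∧ g • x₂ = y₂ ∧ g • x₃ = y₃)
    (μ : G → ℝ) (hμ0 : ∀ g, 0 ≤ μ g) (hμ1 : ∑ g, μ g = 1)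
    (W : Finset X) :
    (∑ g : G, μ g * ((W ∩ W.image (fun w => g • w)).card : ℝ)) < 4 ∨
      (∑ g : G, μ g * ((W ∩ W.image (fun w => g • w)).card : ℝ)) ≤
        2 * (⨆ g : G, μ g) ^ ((1 : ℝ) / 3) * (W.card : ℝ) ^ 2 := by
  classical
  set n : G → ℕ := fun g => (W ∩ W.image (fun w => g • w)).card with hn
  set S : ℝ := ∑ g : G, μ g * (n g : ℝ) with hS
  by_cases hlt : S < 4
  · left; exact hlt
  right
  push_neg at hlt
  set M : ℝ := ⨆ g : G, μ g with hM
  have hMle : ∀ g, μ g ≤ M := fun g => le_ciSup (Set.Finite.bddAbove (Set.finite_range μ)) g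
  have hM0 : 0 ≤ M := le_trans (hμ0 1) (hMle 1)
  set m : G → ℝ := fun g => max ((n g : ℝ) - 2) 0 with hm
  have hm0 : ∀ g, 0 ≤ m g := fun g => le_max_right _ _
  have h1 : S - 2 ≤ ∑ g : G, μ g * m g := by
    have e : ∑ g : G, μ g * ((n g : ℝ) - 2) = S - 2 := by
      simp only [mul_sub, Finset.sum_sub_distrib, ← Finset.sum_mul, hμ1, hS]
      ring
    rw [← e]
    exact Finset.sum_le_sum fun g _ =>
      mul_le_mul_of_nonneg_left (le_max_left _ _) (hμ0 g)
  have h2 : (∑ g : G, μ g * m g) ^ 3 ≤ ∑ g : G, μ g * (m g) ^ 3 :=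
    Real.pow_arith_mean_le_arith_mean_pow univ μ m (fun g _ => hμ0 g) hμ1
      (fun g _ => hm0 g) 3
  set c : G → ℕ := fun g => ((((W ∩ W.image (fun w => g • w)) ×ˢ
      (W ∩ W.image (fun w => g • w)) ×ˢ (W ∩ W.image (fun w => g • w))).filter
      fun p => p.1 ≠ p.2.1 ∧ p.1 ≠ p.2.2 ∧ p.2.1 ≠ p.2.2)).card with hc
  have h3 : ∀ g, (m g) ^ 3 ≤ (c g : ℝ) := by
    intro g
    have e : c g = n g * ((n g - 1) * (n g - 1) - (n g - 1)) := card_distinct_triples _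
    rw [e]
    exact cube_max_le (n g)
  have h4 : ∑ g : G, μ g * (m g) ^ 3 ≤ ∑ g : G, M * (c g : ℝ) :=
    Finset.sum_le_sum fun g _ =>
      mul_le_mul (hMle g) (h3 g) (by positivity) hM0
  have h6 : ∑ g : G, (c g : ℝ) ≤ (W.card : ℝ) ^ 3 * (W.card : ℝ) ^ 3 := by
    have hk := key_count h3t W
    have : (∑ g : G, (c g : ℝ)) ≤ ((W.card ^ 3 * W.card ^ 3 : ℕ) : ℝ) := by
      exact_mod_cast hk
    push_cast at this
    exact this
  have hfin : (S - 2) ^ 3 ≤ M * ((W.card : ℝ) ^ 3 * (W.card : ℝ) ^ 3) := by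
    calc (S - 2) ^ 3 ≤ (∑ g : G, μ g * m g) ^ 3 :=
          pow_le_pow_left₀ (by linarith) h1 3
      _ ≤ ∑ g : G, μ g * (m g) ^ 3 := h2
      _ ≤ ∑ g : G, M * (c g : ℝ) := h4
      _ = M * ∑ g : G, (c g : ℝ) := by rw [Finset.mul_sum]
      _ ≤ M * ((W.card : ℝ) ^ 3 * (W.card : ℝ) ^ 3) :=
          mul_le_mul_of_nonneg_left h6 hM0
  set c0 : ℝ := M ^ ((1 : ℝ) / 3) with hc0def
  have hc0 : 0 ≤ c0 := Real.rpow_nonneg hM0 _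
  have hcube : c0 ^ (3 : ℕ) = M := by
    rw [hc0def, ← Real.rpow_natCast (M ^ ((1 : ℝ) / 3)) 3, ← Real.rpow_mul hM0]
    norm_num
  have hhalf : (S / 2) ^ 3 ≤ (c0 * (W.card : ℝ) ^ 2) ^ 3 := by
    have e : (c0 * (W.card : ℝ) ^ 2) ^ 3 = M * ((W.card : ℝ) ^ 3 * (W.card : ℝ) ^ 3) := by
      rw [mul_pow, hcube]; ring
    rw [e]
    exact le_trans (pow_le_pow_left₀ (by linarith) (by linarith) 3) hfin
  have hfinal : S / 2 ≤ c0 * (W.card : ℝ) ^ 2 :=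
    le_of_pow_le_pow_left₀ (by norm_num) (mul_nonneg hc0 (by positivity)) hhalf
  linarith
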